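/- Suppose Assumption 1 holds. Then there exists w < ∞ such that sup_{1 ≤ m ≤ (log(1/ε))^{1+δ}} ‖P_1(ε)P_2(ε)⋯P_m(ε) − (P̃^m + ε Σ_{i=1}^{m} a_{i1} P̃^{i−1} P̃⁽¹⁾ P̃^{m−i})‖ = O(ε²(log(1/ε))^w) as ε↓0. -/

import Mathlib

open Matrix Topology Filter

set_option maxHeartbeats 1000000

attribute [local instance] Matrix.linftyOpNormedRing Matrix.linftyOpNormedSpace

/-- The matrix norm ‖A‖ = max_x Σ_y |A(x,y)|. -/
noncomputable def matNorm {T : Type*} [Fintype T] (A : Matrix T T ℝ) : ℝ :=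
  ⨆ x, ∑ y, |A x y|

/-- A square matrix is stochastic if all entries are nonnegative and every row sums to 1. -/
def IsStochastic {T : Type*} [Fintype T] (P : Matrix T T ℝ) : Prop :=
  (∀ x y, 0 ≤ P x y) ∧ ∀ x, ∑ y, P x y = 1

/-- The ordered product P 1 * P 2 * ⋯ * P j. -/
noncomputable def prodP {T : Type*} [Fintype T] [DecidableEq T]
    (P : ℕ → Matrix T T ℝ) (j : ℕ) : Matrix T T ℝ :=
  ((List.range j).map fun i => P (i + 1)).prod

section Aux

variable {T : Type*} [Fintype T] [Nonempty T] [DecidableEq T]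

lemma matNorm_eq (A : Matrix T T ℝ) : matNorm A = ‖A‖ := by
  apply le_antisymm
  · apply ciSup_le
    intro x
    rw [Matrix.linfty_opNorm_def]
    have h := Finset.le_sup (f := fun i => ∑ j, ‖A i j‖₊) (Finset.mem_univ x)
    have := NNReal.coe_le_coe.2 h
    refine le_trans (le_of_eq ?_) this
    push_cast
    simp [Real.norm_eq_abs]
  · rw [Matrix.linfty_opNorm_def]
    obtain ⟨x, hx⟩ := Finset.exists_mem_eq_sup (Finset.univ : Finset T)
      Finset.univ_nonempty (fun i => ∑ j, ‖A i j‖₊)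
    rw [hx.2]
    have : ((∑ j, ‖A x j‖₊ : NNReal) : ℝ) = ∑ y, |A x y| := by
      push_cast; simp [Real.norm_eq_abs]
    rw [this]
    exact le_ciSup (f := fun x => ∑ y, |A x y|) (Set.Finite.bddAbove (Set.finite_range _)) x

lemma norm_stochastic {P : Matrix T T ℝ} (h : IsStochastic P) : ‖P‖ = 1 := by
  rw [← matNorm_eq, matNorm]
  have hrow : ∀ x, ∑ y, |P x y| = 1 := fun x => by
    rw [← h.2 x]; exact Finset.sum_congr rfl fun y _ => abs_of_nonneg (h.1 x y)
  simp only [hrow]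
  exact ciSup_const

lemma pow_norm_le_one (C : Matrix T T ℝ) (hC : ‖C‖ ≤ 1) : ∀ i : ℕ, ‖C ^ i‖ ≤ 1 := by
  intro i
  induction i with
  | zero => simp [pow_zero]
  | succ n ih =>
      rw [pow_succ]
      calc ‖C ^ n * C‖ ≤ ‖C ^ n‖ * ‖C‖ := norm_mul_le _ _
        _ ≤ 1 * 1 := mul_le_mul ih hC (norm_nonneg _) zero_le_one
        _ = 1 := one_mul 1

lemma key_expansion (C : Matrix T T ℝ) (hC : ‖C‖ ≤ 1) (d : ℝ) (hd : 0 ≤ d)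
    (D : ℕ → Matrix T T ℝ) :
    ∀ m : ℕ, (∀ i < m, ‖D (i + 1)‖ ≤ d) →
      ‖((List.range m).map fun i => C + D (i + 1)).prod - C ^ m -
          ∑ i ∈ Finset.range m, C ^ i * D (i + 1) * C ^ (m - (i + 1))‖
        ≤ (1 + d) ^ m - 1 - m * d := by
  intro m
  induction m with
  | zero => intro _; simp
  | succ m ih =>
      intro hD
      have ihm := ih fun i hi => hD i (Nat.lt_succ_of_lt hi)
      have hDm : ‖D (m + 1)‖ ≤ d := hD m (Nat.lt_succ_self m)
      set Pm : Matrix T T ℝ := ((List.range m).map fun i => C + D (i + 1)).prod with hPm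
      set Sm : Matrix T T ℝ := ∑ i ∈ Finset.range m, C ^ i * D (i + 1) * C ^ (m - (i + 1))
        with hSm
      have hprod : ((List.range (m+1)).map fun i => C + D (i + 1)).prod
          = Pm * (C + D (m + 1)) := by
        rw [List.range_succ, List.map_append, List.prod_append]; simp [hPm]
      have hSsucc : ∑ i ∈ Finset.range (m+1), C ^ i * D (i + 1) * C ^ (m + 1 - (i + 1))
          = Sm * C + C ^ m * D (m + 1) := by
        rw [Finset.sum_range_succ, hSm, Finset.sum_mul]
        congr 1
        · apply Finset.sum_congr rfl
          intro i hi
          have hi' : i + 1 ≤ m := Finset.mem_range.1 hi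
          have he : m + 1 - (i + 1) = (m - (i + 1)) + 1 := by omega
          rw [he, pow_succ, ← mul_assoc]
        · simp
      have hSnorm : ‖Sm‖ ≤ (m : ℝ) * d := by
        calc ‖Sm‖ ≤ ∑ i ∈ Finset.range m, ‖C ^ i * D (i + 1) * C ^ (m - (i + 1))‖ :=
              norm_sum_le _ _
          _ ≤ ∑ _i ∈ Finset.range m, d := by
              apply Finset.sum_le_sum
              intro i hi
              calc ‖C ^ i * D (i + 1) * C ^ (m - (i + 1))‖
                  ≤ ‖C ^ i * D (i + 1)‖ * ‖C ^ (m - (i+1))‖ := norm_mul_le _ _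
                _ ≤ (‖C ^ i‖ * ‖D (i + 1)‖) * ‖C ^ (m - (i+1))‖ := by
                    apply mul_le_mul_of_nonneg_right (norm_mul_le _ _) (norm_nonneg _)
                _ ≤ (1 * d) * 1 := by
                    apply mul_le_mul _ (pow_norm_le_one C hC _) (norm_nonneg _) (by positivity)
                    exact mul_le_mul (pow_norm_le_one C hC _)
                      (hD i (Nat.lt_succ_of_lt (Finset.mem_range.1 hi)))
                      (norm_nonneg _) zero_le_one
                _ = d := by ring
          _ = (m : ℝ) * d := by simp [mul_comm]
      have hkey : ((List.range (m+1)).map fun i => C + D (i + 1)).prod - C ^ (m+1) -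
          (∑ i ∈ Finset.range (m+1), C ^ i * D (i + 1) * C ^ (m + 1 - (i + 1)))
          = (Pm - C ^ m - Sm) * (C + D (m + 1)) + Sm * D (m + 1) := by
        rw [hprod, hSsucc, pow_succ]
        noncomm_ring
      rw [hkey]
      have hCD : ‖C + D (m+1)‖ ≤ 1 + d := le_trans (norm_add_le _ _) (by linarith)
      have hr : (0:ℝ) ≤ (1 + d) ^ m - 1 - m * d := by
        have := one_add_mul_le_pow (a := d) (by linarith) m
        linarith
      calc ‖(Pm - C ^ m - Sm) * (C + D (m + 1)) + Sm * D (m + 1)‖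
          ≤ ‖(Pm - C ^ m - Sm) * (C + D (m + 1))‖ + ‖Sm * D (m + 1)‖ := norm_add_le _ _
        _ ≤ ((1 + d) ^ m - 1 - m * d) * (1 + d) + ((m:ℝ) * d) * d := by
            refine le_trans (add_le_add (norm_mul_le _ _) (norm_mul_le _ _)) ?_
            exact add_le_add (mul_le_mul ihm hCD (norm_nonneg _) hr)
              (mul_le_mul hSnorm hDm (norm_nonneg _) (by positivity))
        _ ≤ (1 + d) ^ (m+1) - 1 - (↑(m+1)) * d := le_of_eq (by push_cast; ring)

lemma tendsto_eps_mul_logpow (W : ℝ) :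
    Tendsto (fun ε : ℝ => ε * Real.log (1/ε) ^ W) (𝓝[>] (0:ℝ)) (𝓝 0) := by
  have h0 : Tendsto (fun ε : ℝ => 1/ε) (𝓝[>] (0:ℝ)) atTop := by
    simpa [one_div] using tendsto_inv_nhdsGT_zero (𝕜 := ℝ)
  have h1 : Tendsto (fun ε : ℝ => Real.log (1/ε)) (𝓝[>] (0:ℝ)) atTop :=
    Real.tendsto_log_atTop.comp h0
  have h2 := (tendsto_rpow_mul_exp_neg_mul_atTop_nhds_zero W 1 one_pos).comp h1
  apply h2.congr'
  filter_upwards [self_mem_nhdsWithin] with ε (hε : 0 < ε)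
  show Real.log (1/ε) ^ W * Real.exp (-1 * Real.log (1/ε)) = ε * Real.log (1/ε) ^ W
  rw [neg_mul, one_mul, one_div, Real.log_inv, neg_neg, Real.exp_log hε, mul_comm]

end Aux

theorem product_expansion_first_order
    {S : Type*} [Fintype S] [Nonempty S] [DecidableEq S]
    (P : ℕ → ℝ → Matrix S S ℝ) (a : ℕ → ℝ) (Pt Pt1 : Matrix S S ℝ)
    (s δ p : ℝ) (hδ : 0 < δ) (hp : 0 < p)
    (hstoch : ∀ k : ℕ, 1 ≤ k → ∀ ε : ℝ, 0 < ε → IsStochastic (P k ε))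
    (hi : ∃ c > (0:ℝ), ∃ ε₀ > (0:ℝ), ∀ ε : ℝ, 0 < ε → ε < ε₀ →
      ∀ i : ℕ, 1 ≤ i → (i : ℝ) ≤ Real.log (1/ε) ^ (1 + δ) →
        matNorm (P i ε - (Pt + (ε * a i) • Pt1)) ≤ c * ε ^ 2 * Real.log (1/ε) ^ s)
    (hii : ∃ c > (0:ℝ), ∃ i₀ : ℕ, ∀ i : ℕ, i₀ ≤ i → |a i| ≤ c * (i : ℝ) ^ p) :
    ∃ w : ℝ, ∃ c > (0:ℝ), ∃ ε₁ > (0:ℝ), ∀ ε : ℝ, 0 < ε → ε < ε₁ →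
      ∀ m : ℕ, 1 ≤ m → (m : ℝ) ≤ Real.log (1/ε) ^ (1 + δ) →
        matNorm (prodP (fun k => P k ε) m -
            (Pt ^ m + ε • ∑ i ∈ Finset.range m,
              a (i + 1) • (Pt ^ i * Pt1 * Pt ^ (m - (i + 1)))))
          ≤ c * ε ^ 2 * Real.log (1/ε) ^ w := by
  classical
  obtain ⟨c, hc, ε₀, hε₀, hHi⟩ := hi
  obtain ⟨c₂, hc₂, i₀, hHii⟩ := hii
  set K : ℝ := ‖Pt1‖ with hKdef
  have hK0 : 0 ≤ K := norm_nonneg _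
  set Ca : ℝ := c₂ + ∑ i ∈ Finset.range i₀, |a i| with hCadef
  have hCa0 : 0 < Ca :=
    add_pos_of_pos_of_nonneg hc₂ (Finset.sum_nonneg fun j _ => abs_nonneg (a j))
  have ha : ∀ i : ℕ, 1 ≤ i → |a i| ≤ Ca * (i:ℝ) ^ p := by
    intro i hi1
    by_cases hcase : i₀ ≤ i
    · have h := hHii i hcase
      have hle : c₂ * (i:ℝ)^p ≤ Ca * (i:ℝ)^p :=
        mul_le_mul_of_nonneg_right
          (le_add_of_nonneg_right (Finset.sum_nonneg fun j _ => abs_nonneg (a j)))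
          (Real.rpow_nonneg (Nat.cast_nonneg i) p)
      linarith
    · push_neg at hcase
      have h1 : |a i| ≤ ∑ j ∈ Finset.range i₀, |a j| :=
        Finset.single_le_sum (fun j _ => abs_nonneg (a j)) (Finset.mem_range.2 hcase)
      have h2 : (1:ℝ) ≤ (i:ℝ)^p := by
        calc (1:ℝ) = (1:ℝ)^p := (Real.one_rpow p).symm
          _ ≤ (i:ℝ)^p := Real.rpow_le_rpow zero_le_one (by exact_mod_cast hi1) hp.le
      calc |a i| ≤ Ca := le_trans h1 (le_add_of_nonneg_left hc₂.le)
        _ = Ca * 1 := (mul_one Ca).symm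
        _ ≤ Ca * (i:ℝ)^p := mul_le_mul_of_nonneg_left h2 hCa0.le
  set W : ℝ := (1+p)*(1+δ) + |s| + 2 with hWdef
  have hW0 : 0 ≤ W := by nlinarith [abs_nonneg s, mul_nonneg hp.le hδ.le]
  set C₆ : ℝ := Ca * (K + 1) + c with hC₆def
  have hC₆0 : 0 < C₆ := by positivity
  have hT := tendsto_eps_mul_logpow W
  -- good region
  have hEv : ∀ᶠ ε in 𝓝[>](0:ℝ),
      (ε < ε₀ ∧ ε < Real.exp (-1)) ∧ C₆ * (ε * Real.log (1/ε) ^ W) ≤ 1 := by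
    have e1 : Set.Ioo (0:ℝ) (min ε₀ (Real.exp (-1))) ∈ 𝓝[>] (0:ℝ) :=
      Ioo_mem_nhdsGT_of_mem ⟨le_refl 0, lt_min hε₀ (Real.exp_pos _)⟩
    have e2 : ∀ᶠ ε in 𝓝[>](0:ℝ), C₆ * (ε * Real.log (1/ε) ^ W) < 1 := by
      have h := hT.const_mul C₆
      rw [mul_zero] at h
      exact h.eventually_lt_const one_pos
    filter_upwards [e1, e2] with ε h1 h2
    exact ⟨⟨lt_of_lt_of_le h1.2 (min_le_left _ _), lt_of_lt_of_le h1.2 (min_le_right _ _)⟩, h2.le⟩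
  -- per-ε basic facts
  have basic : ∀ ε : ℝ, 0 < ε → ε < Real.exp (-1) →
      1 ≤ Real.log (1/ε) ∧ ε ≤ 1 := by
    intro ε hε0 hεe
    constructor
    · rw [Real.le_log_iff_exp_le (by positivity)]
      rw [le_div_iff₀ hε0]
      calc Real.exp 1 * ε ≤ Real.exp 1 * Real.exp (-1) :=
            mul_le_mul_of_nonneg_left hεe.le (Real.exp_pos 1).le
        _ = 1 := by rw [← Real.exp_add]; norm_num
    · have : Real.exp (-1) ≤ 1 := by
        rw [show (1:ℝ) = Real.exp 0 by simp]
        exact Real.exp_le_exp.2 (by norm_num)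
      linarith
  -- ‖Pt‖ ≤ 1
  have hPt : ‖Pt‖ ≤ 1 := by
    have hT1 : Tendsto (fun ε : ℝ => 1 + (|a 1| * K + c) * (ε * Real.log (1/ε) ^ W))
        (𝓝[>](0:ℝ)) (𝓝 1) := by
      have := (hT.const_mul (|a 1| * K + c)).const_add 1
      simpa using this
    refine ge_of_tendsto hT1 ?_
    filter_upwards [hEv, self_mem_nhdsWithin] with ε hε hε0'
    have hε0 : 0 < ε := hε0'
    obtain ⟨⟨hεε₀, hεe⟩, _⟩ := hε
    obtain ⟨hL1, hε1⟩ := basic ε hε0 hεe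
    set L := Real.log (1/ε) with hLdef
    have hLpos : (0:ℝ) < L := lt_of_lt_of_le one_pos hL1
    have hLW1 : 1 ≤ L ^ W := Real.one_le_rpow hL1 hW0
    have hsW : s ≤ W := le_trans (le_abs_self s)
      (by nlinarith [mul_nonneg hp.le hδ.le, hδ.le, hp.le])
    have h1L : ((1:ℕ):ℝ) ≤ L ^ (1+δ) := by
      push_cast
      exact Real.one_le_rpow hL1 (by linarith)
    have hE1 := hHi ε hε0 hεε₀ 1 le_rfl h1L
    rw [matNorm_eq] at hE1
    have hPdec : Pt = P 1 ε - (P 1 ε - (Pt + (ε * a 1) • Pt1)) - (ε * a 1) • Pt1 := by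
      abel
    have hnorm : ‖Pt‖ ≤ ‖P 1 ε‖ + ‖P 1 ε - (Pt + (ε * a 1) • Pt1)‖ + ‖(ε * a 1) • Pt1‖ := by
      calc ‖Pt‖ = ‖P 1 ε - (P 1 ε - (Pt + (ε * a 1) • Pt1)) - (ε * a 1) • Pt1‖ :=
            congrArg norm hPdec
        _ ≤ ‖P 1 ε - (P 1 ε - (Pt + (ε * a 1) • Pt1))‖ + ‖(ε * a 1) • Pt1‖ := norm_sub_le _ _
        _ ≤ ‖P 1 ε‖ + ‖P 1 ε - (Pt + (ε * a 1) • Pt1)‖ + ‖(ε * a 1) • Pt1‖ :=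
            add_le_add_left (norm_sub_le _ _) _
    have hP1 : ‖P 1 ε‖ = 1 := norm_stochastic (hstoch 1 le_rfl ε hε0)
    have hsmulnorm : ‖(ε * a 1) • Pt1‖ = ε * |a 1| * K := by
      rw [norm_smul, Real.norm_eq_abs, abs_mul, abs_of_pos hε0, hKdef]
    have A1 : c * ε^2 * L^s ≤ c * (ε * L^W) := by
      calc c * ε^2 * L^s ≤ c * ε^2 * L^W :=
            mul_le_mul_of_nonneg_left (Real.rpow_le_rpow_of_exponent_le hL1 hsW)
              (by positivity)
        _ = c * (ε * L^W) * ε := by ring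
        _ ≤ c * (ε * L^W) * 1 := by
            refine mul_le_mul_of_nonneg_left hε1 ?_
            have := Real.rpow_nonneg hLpos.le W
            positivity
        _ = c * (ε * L^W) := mul_one _
    have A2 : ε * |a 1| * K ≤ |a 1| * K * (ε * L^W) := by
      calc ε * |a 1| * K = (|a 1| * K) * ε := by ring
        _ ≤ (|a 1| * K) * (ε * L^W) :=
            mul_le_mul_of_nonneg_left (le_mul_of_one_le_right hε0.le hLW1)
              (by positivity)
    calc ‖Pt‖ ≤ ‖P 1 ε‖ + ‖P 1 ε - (Pt + (ε * a 1) • Pt1)‖ + ‖(ε * a 1) • Pt1‖ := hnorm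
      _ ≤ 1 + c * ε^2 * L^s + ε * |a 1| * K := by
          rw [hP1, hsmulnorm]
          exact add_le_add_left (add_le_add_right hE1 1) _
      _ ≤ 1 + (|a 1| * K + c) * (ε * L^W) := by nlinarith [A1, A2]
  -- extract ε₁
  rw [Filter.eventually_iff, mem_nhdsGT_iff_exists_Ioo_subset] at hEv
  obtain ⟨ε₁, hε₁, hsub⟩ := hEv
  refine ⟨2*W, (3/4)*C₆^2 + c, by positivity, ε₁, hε₁, ?_⟩
  intro ε hε0 hεε₁ m hm1 hmL
  obtain ⟨⟨hεε₀, hεe⟩, hsmall⟩ := hsub ⟨hε0, hεε₁⟩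
  obtain ⟨hL1, hε1⟩ := basic ε hε0 hεe
  set L := Real.log (1/ε) with hLdef
  have hLpos : (0:ℝ) < L := lt_of_lt_of_le one_pos hL1
  have hLnn : ∀ u : ℝ, 0 ≤ L ^ u := fun u => Real.rpow_nonneg hLpos.le u
  have hLW1 : 1 ≤ L ^ W := Real.one_le_rpow hL1 hW0
  have hmono : ∀ u v : ℝ, u ≤ v → L^u ≤ L^v := fun u v h =>
    Real.rpow_le_rpow_of_exponent_le hL1 h
  have hLmul : ∀ u v : ℝ, L^u * L^v = L^(u+v) := fun u v => (Real.rpow_add hLpos u v).symm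
  -- definitions
  set E : ℕ → Matrix S S ℝ := fun i => P i ε - (Pt + (ε * a i) • Pt1) with hEdef
  set D : ℕ → Matrix S S ℝ := fun i => P i ε - Pt with hDdef
  set d : ℝ := ε * (Ca * L^((1+δ)*p)) * K + c * ε^2 * L^s with hddef
  have hd0 : 0 ≤ d := by
    have h1 := hLnn ((1+δ)*p); have h2 := hLnn s
    have : 0 ≤ ε * (Ca * L^((1+δ)*p)) * K := by positivity
    have : 0 ≤ c * ε^2 * L^s := by positivity
    rw [hddef]; linarith [mul_nonneg (mul_nonneg hε0.le (mul_nonneg hCa0.le h1)) hK0,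
      mul_nonneg (mul_nonneg hc.le (sq_nonneg ε)) h2]
  -- bound on each D
  have hEbd : ∀ i, i < m → ‖E (i+1)‖ ≤ c * ε^2 * L^s := by
    intro i him
    have hi1 : (1:ℕ) ≤ i + 1 := Nat.succ_le_succ (Nat.zero_le i)
    have hiL : ((i+1:ℕ):ℝ) ≤ L ^ (1+δ) := by
      refine le_trans ?_ hmL
      exact_mod_cast Nat.succ_le_of_lt him
    have h := hHi ε hε0 hεε₀ (i+1) hi1 hiL
    rw [matNorm_eq] at h
    exact h
  have hDle : ∀ i, i < m → ‖D (i+1)‖ ≤ d := by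
    intro i him
    have hi1 : (1:ℕ) ≤ i + 1 := Nat.succ_le_succ (Nat.zero_le i)
    have haD : D (i+1) = (ε * a (i+1)) • Pt1 + E (i+1) := by
      simp only [hDdef, hEdef]; abel
    have h2 : ((i+1:ℕ):ℝ)^p ≤ L^((1+δ)*p) := by
      rw [Real.rpow_mul hLpos.le]
      refine Real.rpow_le_rpow (Nat.cast_nonneg _) ?_ hp.le
      refine le_trans ?_ hmL
      exact_mod_cast Nat.succ_le_of_lt him
    have h3 : |a (i+1)| ≤ Ca * L^((1+δ)*p) :=
      le_trans (ha (i+1) hi1) (mul_le_mul_of_nonneg_left h2 hCa0.le)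
    calc ‖D (i+1)‖ ≤ ‖(ε * a (i+1)) • Pt1‖ + ‖E (i+1)‖ := by
          rw [haD]; exact norm_add_le _ _
      _ ≤ ε * (Ca * L^((1+δ)*p)) * K + c * ε^2 * L^s := by
          refine add_le_add ?_ (hEbd i him)
          rw [norm_smul, Real.norm_eq_abs, abs_mul, abs_of_pos hε0, ← hKdef]
          exact mul_le_mul_of_nonneg_right (mul_le_mul_of_nonneg_left h3 hε0.le) hK0
      _ = d := hddef.symm
  -- the product written with D
  have hprodEq : prodP (fun k => P k ε) m = ((List.range m).map fun i => Pt + D (i+1)).prod := by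
    unfold prodP
    congr 1
    apply List.map_congr_left
    intro i _
    simp only [hDdef]
    abel
  have hR := key_expansion Pt hPt d hd0 D m hDle
  rw [← hprodEq] at hR
  -- F term
  have hFle : ‖∑ i ∈ Finset.range m, Pt^i * E (i+1) * Pt^(m - (i+1))‖
      ≤ (m:ℝ) * (c * ε^2 * L^s) := by
    calc ‖∑ i ∈ Finset.range m, Pt^i * E (i+1) * Pt^(m - (i+1))‖
        ≤ ∑ i ∈ Finset.range m, ‖Pt^i * E (i+1) * Pt^(m - (i+1))‖ := norm_sum_le _ _
      _ ≤ ∑ _i ∈ Finset.range m, c * ε^2 * L^s := by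
          apply Finset.sum_le_sum
          intro i hi
          calc ‖Pt^i * E (i+1) * Pt^(m - (i+1))‖
              ≤ ‖Pt^i * E (i+1)‖ * ‖Pt^(m-(i+1))‖ := norm_mul_le _ _
            _ ≤ (‖Pt^i‖ * ‖E (i+1)‖) * ‖Pt^(m-(i+1))‖ :=
                mul_le_mul_of_nonneg_right (norm_mul_le _ _) (norm_nonneg _)
            _ ≤ (1 * (c * ε^2 * L^s)) * 1 := by
                refine mul_le_mul ?_ (pow_norm_le_one Pt hPt _) (norm_nonneg _) ?_
                · exact mul_le_mul (pow_norm_le_one Pt hPt _)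
                    (hEbd i (Finset.mem_range.1 hi)) (norm_nonneg _) zero_le_one
                · have := hLnn s; positivity
            _ = c * ε^2 * L^s := by ring
      _ = (m:ℝ) * (c * ε^2 * L^s) := by simp [mul_comm]
  -- decomposition
  have hdecomp : prodP (fun k => P k ε) m -
      (Pt ^ m + ε • ∑ i ∈ Finset.range m, a (i + 1) • (Pt ^ i * Pt1 * Pt ^ (m - (i + 1))))
      = (prodP (fun k => P k ε) m - Pt^m -
          ∑ i ∈ Finset.range m, Pt^i * D (i+1) * Pt^(m-(i+1)))
        + ∑ i ∈ Finset.range m, Pt^i * E (i+1) * Pt^(m-(i+1)) := by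
    have hsum : ∑ i ∈ Finset.range m, Pt^i * D (i+1) * Pt^(m-(i+1))
        = ε • (∑ i ∈ Finset.range m, a (i + 1) • (Pt ^ i * Pt1 * Pt ^ (m - (i + 1))))
          + ∑ i ∈ Finset.range m, Pt^i * E (i+1) * Pt^(m-(i+1)) := by
      rw [Finset.smul_sum, ← Finset.sum_add_distrib]
      apply Finset.sum_congr rfl
      intro i _
      have haD : D (i+1) = (ε * a (i+1)) • Pt1 + E (i+1) := by
        simp only [hDdef, hEdef]; abel
      rw [haD, mul_add, add_mul]
      congr 1
      rw [smul_smul, mul_smul_comm, smul_mul_assoc]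
    rw [hsum]
    abel
  -- main estimate chain
  have hεLW0 : 0 ≤ ε * L^W := mul_nonneg hε0.le (hLnn W)
  have htt : (m:ℝ) * d ≤ C₆ * (ε * L^W) := by
    have hq1 : (1+δ) + (1+δ)*p ≤ W := by
      rw [hWdef]; nlinarith [abs_nonneg s]
    have hq2 : (1+δ) + s ≤ W := by
      rw [hWdef]; nlinarith [le_abs_self s, mul_nonneg hp.le hδ.le, hp.le, hδ.le]
    have b1 : (m:ℝ) * (ε * (Ca * L^((1+δ)*p)) * K) ≤ Ca * K * (ε * L^W) := by
      calc (m:ℝ) * (ε * (Ca * L^((1+δ)*p)) * K)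
          ≤ L^(1+δ) * (ε * (Ca * L^((1+δ)*p)) * K) := by
            refine mul_le_mul_of_nonneg_right hmL ?_
            have := hLnn ((1+δ)*p); positivity
        _ = ε * Ca * K * (L^(1+δ) * L^((1+δ)*p)) := by ring
        _ = ε * Ca * K * L^((1+δ)+(1+δ)*p) := by rw [hLmul]
        _ ≤ ε * Ca * K * L^W := by
            refine mul_le_mul_of_nonneg_left (hmono _ _ hq1) ?_
            positivity
        _ = Ca * K * (ε * L^W) := by ring
    have b2 : (m:ℝ) * (c * ε^2 * L^s) ≤ c * (ε * L^W) := by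
      calc (m:ℝ) * (c * ε^2 * L^s)
          ≤ L^(1+δ) * (c * ε^2 * L^s) := by
            refine mul_le_mul_of_nonneg_right hmL ?_
            have := hLnn s; positivity
        _ = c * ε^2 * (L^(1+δ) * L^s) := by ring
        _ = c * ε^2 * L^((1+δ)+s) := by rw [hLmul]
        _ ≤ c * ε^2 * L^W := mul_le_mul_of_nonneg_left (hmono _ _ hq2) (by positivity)
        _ = c * (ε * L^W) * ε := by ring
        _ ≤ c * (ε * L^W) * 1 := by
            refine mul_le_mul_of_nonneg_left hε1 ?_
            positivity
        _ = c * (ε * L^W) := mul_one _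
    calc (m:ℝ) * d = (m:ℝ) * (ε * (Ca * L^((1+δ)*p)) * K) + (m:ℝ) * (c * ε^2 * L^s) := by
          rw [hddef]; ring
      _ ≤ Ca * K * (ε * L^W) + c * (ε * L^W) := add_le_add b1 b2
      _ ≤ C₆ * (ε * L^W) := by
          rw [hC₆def]
          nlinarith [mul_nonneg hCa0.le hεLW0]
  have ht1 : (m:ℝ) * d ≤ 1 := le_trans htt hsmall
  have ht0 : 0 ≤ (m:ℝ) * d := mul_nonneg (Nat.cast_nonneg m) hd0
  have hexp : (1+d)^m - 1 - (m:ℝ)*d ≤ ((m:ℝ)*d)^2 * (3/4) := by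
    have h1 : (1+d)^m ≤ Real.exp ((m:ℝ)*d) := by
      rw [Real.exp_nat_mul]
      exact pow_le_pow_left₀ (by linarith) (by linarith [Real.add_one_le_exp d]) m
    have h2 : Real.exp ((m:ℝ)*d) - 1 - (m:ℝ)*d ≤ ((m:ℝ)*d)^2 * (3/4) := by
      have h := Real.exp_bound (n := 2) (x := (m:ℝ)*d)
        (by rw [abs_of_nonneg ht0]; exact ht1) (by norm_num)
      rw [abs_of_nonneg ht0] at h
      have h2' := (abs_le.1 h).2
      simp [Finset.sum_range_succ] at h2'
      nlinarith
    linarith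
  have hsq : (L^W)^(2:ℕ) = L^(2*W) := by
    rw [← Real.rpow_natCast (L^W) 2, ← Real.rpow_mul hLpos.le]
    norm_num [mul_comm]
  have hF2 : (m:ℝ) * (c * ε^2 * L^s) ≤ c * ε^2 * L^(2*W) := by
    have hq3 : (1+δ) + s ≤ 2*W := by
      rw [hWdef]; nlinarith [le_abs_self s, abs_nonneg s, mul_nonneg hp.le hδ.le, hp.le, hδ.le]
    calc (m:ℝ) * (c * ε^2 * L^s)
        ≤ L^(1+δ) * (c * ε^2 * L^s) := by
          refine mul_le_mul_of_nonneg_right hmL ?_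
          have := hLnn s; positivity
      _ = c * ε^2 * (L^(1+δ) * L^s) := by ring
      _ = c * ε^2 * L^((1+δ)+s) := by rw [hLmul]
      _ ≤ c * ε^2 * L^(2*W) := mul_le_mul_of_nonneg_left (hmono _ _ hq3) (by positivity)
  rw [matNorm_eq, hdecomp]
  calc ‖(prodP (fun k => P k ε) m - Pt^m -
          ∑ i ∈ Finset.range m, Pt^i * D (i+1) * Pt^(m-(i+1)))
        + ∑ i ∈ Finset.range m, Pt^i * E (i+1) * Pt^(m-(i+1))‖
      ≤ ‖prodP (fun k => P k ε) m - Pt^m -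
          ∑ i ∈ Finset.range m, Pt^i * D (i+1) * Pt^(m-(i+1))‖
        + ‖∑ i ∈ Finset.range m, Pt^i * E (i+1) * Pt^(m-(i+1))‖ := norm_add_le _ _
    _ ≤ ((1+d)^m - 1 - (m:ℝ)*d) + (m:ℝ) * (c * ε^2 * L^s) := add_le_add hR hFle
    _ ≤ ((m:ℝ)*d)^2 * (3/4) + c * ε^2 * L^(2*W) := add_le_add hexp hF2
    _ ≤ (C₆ * (ε * L^W))^2 * (3/4) + c * ε^2 * L^(2*W) := by
        refine add_le_add_left (mul_le_mul_of_nonneg_right ?_ (by norm_num)) _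
        exact pow_le_pow_left₀ ht0 htt 2
    _ = ((3/4)*C₆^2 + c) * ε^2 * L^(2*W) := by
        rw [mul_pow, mul_pow, hsq]; ring
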